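/- If μ ≤^{h'} ν and ν is h'-complete (where h' is the jump of h), then G(μ ⊕ μ₁, ν, h) ≡ G(μ₁, ν, h) for every numbering μ₁, i.e. the two numberings are reducible to each other by total computable functions. -/

import Mathlib

/-- Relativized partial recursiveness: `f` is partial recursive in the (total) oracle `O`. -/
inductive RecursiveInOrc (O : ℕ → ℕ) : (ℕ →. ℕ) → Prop
  | oracle : RecursiveInOrc O O
  | zero : RecursiveInOrc O (pure 0)
  | succ : RecursiveInOrc O Nat.succ
  | left : RecursiveInOrc O ↑fun n : ℕ => n.unpair.1
  | right : RecursiveInOrc O ↑fun n : ℕ => n.unpair.2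
  | pair {f g} : RecursiveInOrc O f → RecursiveInOrc O g →
      RecursiveInOrc O fun n => Nat.pair <$> f n <*> g n
  | comp {f g} : RecursiveInOrc O f → RecursiveInOrc O g → RecursiveInOrc O fun n => g n >>= f
  | prec {f g} : RecursiveInOrc O f → RecursiveInOrc O g → RecursiveInOrc O (Nat.unpaired fun a n =>
      n.rec (f a) fun y IH => do let i ← IH; g (Nat.pair a (Nat.pair y i)))
  | rfind {f} : RecursiveInOrc O f →
      RecursiveInOrc O fun a => Nat.rfind fun n => (fun m => m = 0) <$> f (Nat.pair a n)

/-- Computable (many-one style) reducibility between numberings. -/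
def NumRed {S : Type*} (μ ν : ℕ → S) : Prop :=
  ∃ f : ℕ → ℕ, Computable f ∧ ∀ n, μ n = ν (f n)

/-- Reducibility between numberings via an `O`-computable total function. -/
def NumRedIn {S : Type*} (O : ℕ → ℕ) (μ ν : ℕ → S) : Prop :=
  ∃ f : ℕ → ℕ, RecursiveInOrc O ↑f ∧ ∀ n, μ n = ν (f n)

/-- The join `μ ⊕ ν` of two numberings. -/
def NumJoin {S : Type*} (μ ν : ℕ → S) : ℕ → S :=
  fun n => if n % 2 = 0 then μ (n / 2) else ν (n / 2)

/-- `ν` is `O`-precomplete: every `O`-partial computable function has a total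
computable `ν`-totalizer. -/
def Precomplete {S : Type*} (O : ℕ → ℕ) (ν : ℕ → S) : Prop :=
  ∀ ψ : ℕ →. ℕ, RecursiveInOrc O ψ →
    ∃ t : ℕ → ℕ, Computable t ∧ ∀ (x : ℕ) (hx : (ψ x).Dom), ν (t x) = ν ((ψ x).get hx)

/-- `ν` is `O`-complete with respect to `a`. -/
def CompleteAt {S : Type*} (O : ℕ → ℕ) (ν : ℕ → S) (a : S) : Prop :=
  ∀ ψ : ℕ →. ℕ, RecursiveInOrc O ψ →
    ∃ t : ℕ → ℕ, Computable t ∧ (∀ (x : ℕ) (hx : (ψ x).Dom), ν (t x) = ν ((ψ x).get hx)) ∧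
      ∀ x : ℕ, ¬ (ψ x).Dom → ν (t x) = a

open Classical in
/-- The jump (halting problem) of a partial function `U`, as a 0-1 valued total function. -/
noncomputable def jumpOf (U : ℕ →. ℕ) : ℕ → ℕ :=
  fun x => if (U x).Dom then 1 else 0

open Classical in
/-- The operation `G(μ,ν,h)` defined from a universal `h`-partial computable function `U`:
`G⟨n,x⟩ = ν n` if `U x` diverges and `μ (U x)` if it converges. -/
noncomputable def GOp {S : Type*} (μ ν : ℕ → S) (U : ℕ →. ℕ) : ℕ → S :=
  fun m =>
    if hd : (U (Nat.unpair m).2).Dom then μ ((U (Nat.unpair m).2).get hd)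
    else ν (Nat.unpair m).1

theorem RecursiveInOrc.of_partrec {O : ℕ → ℕ} {f : ℕ →. ℕ} (hf : Nat.Partrec f) :
    RecursiveInOrc O f := by
  induction hf with
  | zero => exact .zero
  | succ => exact .succ
  | left => exact .left
  | right => exact .right
  | pair _ _ ih1 ih2 => exact .pair ih1 ih2
  | comp _ _ ih1 ih2 => exact .comp ih1 ih2
  | prec _ _ ih1 ih2 => exact .prec ih1 ih2
  | rfind _ ih => exact .rfind ih

theorem RecursiveInOrc.of_computable {O : ℕ → ℕ} {f : ℕ → ℕ} (hf : Computable f) :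
    RecursiveInOrc O ↑f := of_partrec (Partrec.nat_iff.1 hf)

theorem RecursiveInOrc.lower {O h : ℕ → ℕ} {f : ℕ →. ℕ} (hf : RecursiveInOrc h f)
    (hh : RecursiveInOrc O ↑h) : RecursiveInOrc O f := by
  induction hf with
  | oracle => exact hh
  | zero => exact .zero
  | succ => exact .succ
  | left => exact .left
  | right => exact .right
  | pair _ _ ih1 ih2 => exact .pair ih1 ih2
  | comp _ _ ih1 ih2 => exact .comp ih1 ih2
  | prec _ _ ih1 ih2 => exact .prec ih1 ih2
  | rfind _ ih => exact .rfind ih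

theorem RecursiveInOrc.of_eq {O : ℕ → ℕ} {f g : ℕ →. ℕ} (hf : RecursiveInOrc O f)
    (H : ∀ n, f n = g n) : RecursiveInOrc O g := (funext H : f = g) ▸ hf

theorem RecursiveInOrc.totalComp {O : ℕ → ℕ} {f g : ℕ → ℕ} (hf : RecursiveInOrc O ↑f)
    (hg : RecursiveInOrc O ↑g) : RecursiveInOrc O ↑(fun n => f (g n)) :=
  (hf.comp hg).of_eq fun n => by change Part.bind _ _ = _; exact Part.bind_some _ _

theorem RecursiveInOrc.totalPair {O : ℕ → ℕ} {f g : ℕ → ℕ} (hf : RecursiveInOrc O ↑f)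
    (hg : RecursiveInOrc O ↑g) : RecursiveInOrc O ↑(fun n => Nat.pair (f n) (g n)) :=
  (hf.pair hg).of_eq fun n => by simp [Seq.seq]

theorem RecursiveInOrc.totalIf {O : ℕ → ℕ} {a b c : ℕ → ℕ} (ha : RecursiveInOrc O ↑a)
    (hb : RecursiveInOrc O ↑b) (hc : RecursiveInOrc O ↑c) :
    RecursiveInOrc O ↑(fun n => if a n = 1 then b n else c n) := by
  have hglue : Computable (fun p : ℕ =>
      if p.unpair.1 = 1 then p.unpair.2.unpair.1 else p.unpair.2.unpair.2) := by
    apply Primrec.to_comp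
    exact Primrec.ite (Primrec.eq.comp (Primrec.fst.comp Primrec.unpair) (Primrec.const 1))
      (Primrec.fst.comp (Primrec.unpair.comp (Primrec.snd.comp Primrec.unpair)))
      (Primrec.snd.comp (Primrec.unpair.comp (Primrec.snd.comp Primrec.unpair)))
  exact ((RecursiveInOrc.of_computable hglue).totalComp
    (ha.totalPair (hb.totalPair hc))).of_eq fun n => by simp

theorem unpair2_computable : Computable (fun m : ℕ => m.unpair.2) :=
  (Primrec.snd.comp Primrec.unpair).to_comp

theorem unpair1_computable : Computable (fun m : ℕ => m.unpair.1) :=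
  (Primrec.fst.comp Primrec.unpair).to_comp

/-- if `μ ≤^{h'} ν` and `ν` is `h'`-complete (`h' = jumpOf U` the jump of `h`,
with `U` the universal `h`-partial computable function), then
`G(μ ⊕ μ₁, ν, h) ≡ G(μ₁, ν, h)`. -/
theorem GOp_absorb {S : Type*} (h : ℕ → ℕ) (U : ℕ →. ℕ)
    (hU : RecursiveInOrc h U)
    (huniv : ∀ ψ : ℕ →. ℕ, RecursiveInOrc h ψ → ∃ e : ℕ, ∀ x, ψ x = U (Nat.pair e x))
    (hh : RecursiveInOrc (jumpOf U) ↑h)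
    (μ μ₁ ν : ℕ → S)
    (hred : NumRedIn (jumpOf U) μ ν)
    (hcomp : ∃ s : S, CompleteAt (jumpOf U) ν s) :
    NumRed (GOp (NumJoin μ μ₁) ν U) (GOp μ₁ ν U) ∧
      NumRed (GOp μ₁ ν U) (GOp (NumJoin μ μ₁) ν U) := by
  classical
  obtain ⟨g0, hg0rec, hg0⟩ := hred
  obtain ⟨s, hs⟩ := hcomp
  have hU' : RecursiveInOrc (jumpOf U) U := hU.lower hh
  -- a point where U converges
  obtain ⟨e₂, he₂⟩ := huniv (pure 0) .zero
  set x₀ := Nat.pair e₂ 0 with hx₀def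
  have hx₀ : (U x₀).Dom := by
    rw [← he₂ 0]; trivial
  have hjump_one : ∀ x, jumpOf U x = 1 ↔ (U x).Dom := by
    intro x; unfold jumpOf; split <;> simp [*]
  -- the total function computing U's value relative to the jump
  set d : ℕ → ℕ := fun x => if jumpOf U x = 1 then x else x₀ with hd_def
  have hdDom : ∀ x, (U (d x)).Dom := by
    intro x; by_cases hx : jumpOf U x = 1
    · simpa [hd_def, hx] using (hjump_one x).1 hx
    · simpa [hd_def, hx] using hx₀
  set v : ℕ → ℕ := fun x => (U (d x)).get (hdDom x) with hv_def
  have hvU : ∀ x (hx : (U x).Dom), v x = (U x).get hx := by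
    intro x hx
    have h1 : jumpOf U x = 1 := (hjump_one x).2 hx
    have hdx : d x = x := by simp [hd_def, h1]
    simp only [hv_def]
    congr 1 <;> simp [hdx]
  have hd_rec : RecursiveInOrc (jumpOf U) ↑d := by
    have := RecursiveInOrc.totalIf (a := jumpOf U) (b := id) (c := fun _ => x₀)
      .oracle (.of_computable Computable.id) (.of_computable (Computable.const x₀))
    exact this.of_eq fun x => by simp [hd_def]
  have hv_rec : RecursiveInOrc (jumpOf U) ↑v := by
    have h1 : RecursiveInOrc (jumpOf U) (fun x => U (d x)) :=
      (hU'.comp hd_rec).of_eq fun n => by change Part.bind _ _ = _; exact Part.bind_some _ _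
    exact h1.of_eq fun x => by
      have := Part.some_get (hdDom x)
      simp only [hv_def]
      exact this.symm
  -- the condition function
  set a : ℕ → ℕ := fun m => if jumpOf U m.unpair.2 = 1 ∧ v m.unpair.2 % 2 = 0 then 1 else 0
    with ha_def
  have ha_rec : RecursiveInOrc (jumpOf U) ↑a := by
    have hglue2 : Computable (fun p : ℕ =>
        if p.unpair.1 = 1 ∧ p.unpair.2 % 2 = 0 then 1 else 0) := by
      apply Primrec.to_comp
      refine Primrec.ite (PrimrecPred.and ?_ ?_) (Primrec.const 1) (Primrec.const 0)
      · exact Primrec.eq.comp (Primrec.fst.comp Primrec.unpair) (Primrec.const 1)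
      · exact Primrec.eq.comp ((Primrec.nat_mod).comp (Primrec.snd.comp Primrec.unpair)
          (Primrec.const 2)) (Primrec.const 0)
    have := (RecursiveInOrc.of_computable hglue2).totalComp
      (((RecursiveInOrc.oracle).totalComp (.of_computable unpair2_computable)).totalPair
        (hv_rec.totalComp (.of_computable unpair2_computable)))
    exact this.of_eq fun m => by simp [ha_def]
  -- the O-computable "correction" function ψ
  set ψ : ℕ → ℕ := fun m => if a m = 1 then g0 (v m.unpair.2 / 2) else m.unpair.1 with hψ_def
  have hdiv2 : Computable (fun y : ℕ => y / 2) :=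
    (Primrec.nat_div.comp Primrec.id (Primrec.const 2)).to_comp
  have hψ_rec : RecursiveInOrc (jumpOf U) ↑ψ :=
    RecursiveInOrc.totalIf ha_rec
      (hg0rec.totalComp ((RecursiveInOrc.of_computable hdiv2).totalComp
        (hv_rec.totalComp (.of_computable unpair2_computable))))
      (.of_computable unpair1_computable)
  obtain ⟨t, ht_comp, ht_eq, -⟩ := hs ↑ψ hψ_rec
  have ht : ∀ m, ν (t m) = ν (ψ m) := fun m => by simpa using ht_eq m trivial
  -- the index e₁ for the "odd part" of U
  set φ₀ : ℕ →. ℕ := fun y => Part.ofOption (if y % 2 = 1 then some (y / 2) else none)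
    with hφ₀_def
  have hφ₀_pr : Partrec φ₀ := by
    apply Computable.ofOption
    apply Primrec.to_comp
    exact Primrec.ite (Primrec.eq.comp (Primrec.nat_mod.comp Primrec.id (Primrec.const 2))
        (Primrec.const 1))
      (Primrec.option_some.comp (Primrec.nat_div.comp Primrec.id (Primrec.const 2)))
      (Primrec.const none)
  have hφ : RecursiveInOrc h (fun x => U x >>= φ₀) :=
    (RecursiveInOrc.of_partrec (Partrec.nat_iff.1 hφ₀_pr)).comp hU
  obtain ⟨e₁, he₁⟩ := huniv _ hφ
  -- the index e₃ for the "doubling plus one" of U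
  have hdb : Computable (fun y : ℕ => 2 * y + 1) := by
    apply Primrec.to_comp
    exact Primrec.succ.comp (Primrec.nat_mul.comp (Primrec.const 2) Primrec.id)
  have hη := (RecursiveInOrc.of_computable hdb).comp hU
  obtain ⟨e₃, he₃⟩ := huniv _ hη
  constructor
  · -- G(μ ⊕ μ₁) ≤ G(μ₁)
    refine ⟨fun m => Nat.pair (t m) (Nat.pair e₁ m.unpair.2), ?_, ?_⟩
    · exact Primrec₂.natPair.to_comp.comp ht_comp
        ((Primrec₂.natPair.comp (Primrec.const e₁)
          (Primrec.snd.comp Primrec.unpair)).to_comp)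
    · intro m
      have hUe₁ : U (Nat.pair e₁ m.unpair.2) = U m.unpair.2 >>= φ₀ := (he₁ m.unpair.2).symm
      by_cases hd : (U m.unpair.2).Dom
      · set y := (U m.unpair.2).get hd with hy_def
        by_cases hy : y % 2 = 0
        · -- even value: goes to μ through ν
          have hnd : ¬ (U (Nat.pair e₁ m.unpair.2)).Dom := by
            rw [hUe₁, Part.bind_eq_bind, Part.bind_dom]
            rintro ⟨h1, h2⟩
            simp only [← hy_def] at h2
            rw [if_neg (by omega : ¬ y % 2 = 1)] at h2
            simpa using h2
          have lhs : GOp (NumJoin μ μ₁) ν U m = μ (y / 2) := by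
            simp only [GOp, dif_pos hd, NumJoin, ← hy_def, if_pos hy]
          have hψm : ψ m = g0 (y / 2) := by
            have h1 : jumpOf U (Nat.unpair m).2 = 1 := (hjump_one _).2 hd
            have h2 : v (Nat.unpair m).2 % 2 = 0 := by rw [hvU _ hd]; exact hy
            have ha1 : a m = 1 := by simp [ha_def, h1, h2]
            simp only [hψ_def]
            rw [if_pos ha1, hvU _ hd]
          have rhs : GOp μ₁ ν U (Nat.pair (t m) (Nat.pair e₁ m.unpair.2)) = ν (t m) := by
            simp only [GOp, Nat.unpair_pair, dif_neg hnd]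
          rw [lhs, rhs, ht m, hψm, ← hg0]
        · -- odd value: stays in μ₁
          have hy1 : y % 2 = 1 := by omega
          have hmem : (y / 2) ∈ U (Nat.pair e₁ m.unpair.2) := by
            rw [hUe₁, Part.bind_eq_bind]
            refine Part.mem_bind_iff.2 ⟨y, Part.get_mem hd, ?_⟩
            simp [hφ₀_def, hy1]
          have hd2 : (U (Nat.pair e₁ m.unpair.2)).Dom := Part.dom_iff_mem.2 ⟨_, hmem⟩
          have lhs : GOp (NumJoin μ μ₁) ν U m = μ₁ (y / 2) := by
            simp only [GOp, dif_pos hd, NumJoin, ← hy_def, if_neg hy]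
          have rhs : GOp μ₁ ν U (Nat.pair (t m) (Nat.pair e₁ m.unpair.2)) = μ₁ (y / 2) := by
            simp only [GOp, Nat.unpair_pair, dif_pos hd2]
            congr 1
            exact Part.get_eq_of_mem hmem _
          rw [lhs, rhs]
      · -- divergent: both sides name ν of the first component
        have hnd : ¬ (U (Nat.pair e₁ m.unpair.2)).Dom := by
          rw [hUe₁, Part.bind_eq_bind, Part.bind_dom]
          rintro ⟨h1, -⟩
          exact hd h1
        have hψm : ψ m = m.unpair.1 := by
          have ha0 : a m = 0 := by
            have h1 : ¬ (jumpOf U (Nat.unpair m).2 = 1 ∧ v (Nat.unpair m).2 % 2 = 0) := by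
              rintro ⟨h1, -⟩
              exact hd ((hjump_one _).1 h1)
            simp [ha_def, h1]
          simp only [hψ_def]
          rw [if_neg (by omega : ¬ a m = 1)]
        simp only [GOp, dif_neg hd, Nat.unpair_pair, dif_neg hnd]
        rw [ht m, hψm]
  · -- G(μ₁) ≤ G(μ ⊕ μ₁)
    refine ⟨fun m => Nat.pair m.unpair.1 (Nat.pair e₃ m.unpair.2), ?_, ?_⟩
    · exact Primrec₂.natPair.to_comp.comp unpair1_computable
        ((Primrec₂.natPair.comp (Primrec.const e₃)
          (Primrec.snd.comp Primrec.unpair)).to_comp)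
    · intro m
      have hUe₃ := (he₃ m.unpair.2).symm
      by_cases hd : (U m.unpair.2).Dom
      · set y := (U m.unpair.2).get hd with hy_def
        have hmem : (2 * y + 1) ∈ U (Nat.pair e₃ m.unpair.2) := by
          rw [hUe₃]
          exact Part.mem_bind_iff.2 ⟨y, Part.get_mem hd, by simp⟩
        have hd2 : (U (Nat.pair e₃ m.unpair.2)).Dom := Part.dom_iff_mem.2 ⟨_, hmem⟩
        have lhs : GOp μ₁ ν U m = μ₁ y := by
          simp only [GOp, dif_pos hd, ← hy_def]
        have rhs : GOp (NumJoin μ μ₁) ν U (Nat.pair m.unpair.1 (Nat.pair e₃ m.unpair.2))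
            = μ₁ y := by
          simp only [GOp, Nat.unpair_pair, dif_pos hd2]
          rw [show (U (Nat.pair e₃ m.unpair.2)).get hd2 = 2 * y + 1 from
            Part.get_eq_of_mem hmem _]
          simp only [NumJoin]
          rw [if_neg (by omega : ¬ (2 * y + 1) % 2 = 0)]
          congr 1
          omega
        rw [lhs, rhs]
      · have hnd : ¬ (U (Nat.pair e₃ m.unpair.2)).Dom := by
          rw [hUe₃]; refine mt Part.bind_dom.1 ?_
          rintro ⟨h1, -⟩
          exact hd h1
        simp only [GOp, dif_neg hd, Nat.unpair_pair, dif_neg hnd]
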